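/- Let h ≤ H < Q be positive integers with Q ≪ x and H = o(x) as x → ∞, and let f, g' : ℕ → ℂ be essentially bounded. Then ∑_{1 ≤ a ≤ H} ∑_{H < q ≤ Q} g'(q) ∑_{x < n ≤ x+h, n ≡ a mod q} f(n) = ( ∑_{H < q ≤ Q, {x/q} ≤ H/q} g'(q) ) · ∑_{x < n ≤ x+h} f(n) + O_ε(x^ε h²). -/

import Mathlib

open Finset Filter Asymptotics

/-- `f` is essentially bounded: for every `ε > 0`, `f n ≪_ε n^ε`. -/
def EssBdd (f : ℕ → ℂ) : Prop :=
  ∀ ε : ℝ, 0 < ε → ∃ C : ℝ, ∀ n : ℕ, 1 ≤ n → ‖f n‖ ≤ C * (n : ℝ) ^ ε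

lemma linear_le_geom {r : ℝ} (hr : 1 < r) : ∃ M : ℝ, 1 ≤ M ∧ ∀ k : ℕ, (k : ℝ) + 1 ≤ M * r ^ k := by
  have hbase : (fun k : ℕ => ((k : ℝ) + 1)) =o[atTop] fun k => r ^ k := by
    have h1 : (fun k : ℕ => ((k : ℝ) + 1)) =O[atTop] fun k : ℕ => (k : ℝ) ^ 1 := by
      rw [isBigO_iff]
      refine ⟨2, ?_⟩
      filter_upwards [eventually_ge_atTop 1] with k hk
      have : (1:ℝ) ≤ (k:ℝ) := by exact_mod_cast hk
      simp only [Real.norm_eq_abs, pow_one]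
      rw [abs_of_nonneg (by positivity), abs_of_nonneg (by positivity)]
      linarith
    exact h1.trans_isLittleO (isLittleO_pow_const_const_pow_of_one_lt 1 hr)
  have htend := hbase.tendsto_div_nhds_zero
  obtain ⟨M0, hM0⟩ := htend.bddAbove_range
  refine ⟨max M0 1, le_max_right _ _, fun k => ?_⟩
  have hrk : (0:ℝ) < r ^ k := pow_pos (by linarith) k
  have h2 : ((k : ℝ) + 1) / r ^ k ≤ M0 := hM0 ⟨k, rfl⟩
  have h3 : ((k : ℝ) + 1) / r ^ k ≤ max M0 1 := le_trans h2 (le_max_left _ _)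
  calc (k : ℝ) + 1 = (((k : ℝ) + 1) / r ^ k) * r ^ k := by field_simp
    _ ≤ max M0 1 * r ^ k := by exact mul_le_mul_of_nonneg_right h3 hrk.le

lemma divisor_bound (δ : ℝ) (hδ : 0 < δ) :
    ∃ C : ℝ, 1 ≤ C ∧ ∀ n : ℕ, n ≠ 0 → (n.divisors.card : ℝ) ≤ C * (n : ℝ) ^ δ := by
  have hr : (1:ℝ) < 2 ^ δ := Real.one_lt_rpow_iff_of_pos (by norm_num) |>.2 (Or.inl ⟨by norm_num, hδ⟩)
  obtain ⟨M, hM1, hM⟩ := linear_le_geom hr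
  set K : ℕ := ⌈(2:ℝ) ^ (1/δ)⌉₊ with hK
  refine ⟨M ^ K, one_le_pow₀ hM1, fun n hn => ?_⟩
  -- express both sides as products over prime factors
  rw [Nat.card_divisors hn]
  have hprod : (n : ℝ) = ∏ p ∈ n.primeFactors, ((p : ℝ) ^ (n.factorization p)) := by
    conv_lhs => rw [← Nat.factorization_prod_pow_eq_self hn]
    rw [Nat.factorization_prod_pow_eq_self hn]
    conv_lhs => rw [← Nat.factorization_prod_pow_eq_self hn]
    rw [Nat.prod_factorization_eq_prod_primeFactors]
    push_cast
    rfl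
  have hrpow : (n : ℝ) ^ δ = ∏ p ∈ n.primeFactors, ((p : ℝ) ^ (n.factorization p)) ^ δ := by
    rw [hprod, Real.finset_prod_rpow _ _ (fun p _ => by positivity)]
  push_cast
  rw [hrpow]
  -- per-factor bound
  have key : ∀ p ∈ n.primeFactors,
      ((n.factorization p : ℝ) + 1) ≤
        (if p < K then M else 1) * ((p : ℝ) ^ (n.factorization p)) ^ δ := by
    intro p hp
    have hpp : p.Prime := Nat.prime_of_mem_primeFactors hp
    have hp2 : (2:ℝ) ≤ (p:ℝ) := by exact_mod_cast hpp.two_le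
    set k := n.factorization p
    have hrw : ((p : ℝ) ^ k) ^ δ = ((p : ℝ) ^ δ) ^ k := by
      rw [← Real.rpow_natCast (p:ℝ) k, ← Real.rpow_mul (by positivity), mul_comm,
        Real.rpow_mul (by positivity), Real.rpow_natCast]
    rw [hrw]
    by_cases hpK : p < K
    · rw [if_pos hpK]
      calc (k : ℝ) + 1 ≤ M * (2 ^ δ) ^ k := hM k
        _ ≤ M * ((p:ℝ) ^ δ) ^ k := by
            apply mul_le_mul_of_nonneg_left _ (by linarith)
            exact pow_le_pow_left₀ (by positivity) (Real.rpow_le_rpow (by norm_num) hp2 hδ.le) k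
    · rw [if_neg hpK]
      rw [one_mul]
      have hKp : (2:ℝ) ^ (1/δ) ≤ (p:ℝ) := by
        calc (2:ℝ) ^ (1/δ) ≤ (K : ℝ) := Nat.le_ceil _
          _ ≤ (p : ℝ) := by exact_mod_cast Nat.not_lt.1 hpK
      have h2p : (2:ℝ) ≤ (p:ℝ) ^ δ := by
        calc (2:ℝ) = ((2:ℝ) ^ (1/δ)) ^ δ := by
              rw [← Real.rpow_mul (by norm_num), one_div_mul_cancel hδ.ne', Real.rpow_one]
          _ ≤ (p:ℝ) ^ δ := Real.rpow_le_rpow (by positivity) hKp hδ.le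
      calc (k : ℝ) + 1 ≤ 2 ^ k := by
            have := Nat.lt_two_pow_self (n := k)
            exact_mod_cast Nat.succ_le_of_lt this
        _ ≤ ((p:ℝ) ^ δ) ^ k := pow_le_pow_left₀ (by norm_num) h2p k
  calc (∏ p ∈ n.primeFactors, ((n.factorization p : ℝ) + 1))
      ≤ ∏ p ∈ n.primeFactors, (if p < K then M else 1) * ((p : ℝ) ^ (n.factorization p)) ^ δ :=
        Finset.prod_le_prod (fun p _ => by positivity) key
    _ = (∏ p ∈ n.primeFactors, (if p < K then M else 1)) *
          ∏ p ∈ n.primeFactors, ((p : ℝ) ^ (n.factorization p)) ^ δ := Finset.prod_mul_distrib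
    _ ≤ M ^ K * ∏ p ∈ n.primeFactors, ((p : ℝ) ^ (n.factorization p)) ^ δ := by
        apply mul_le_mul_of_nonneg_right _ (Finset.prod_nonneg fun p _ => by positivity)
        rw [← Finset.prod_filter_mul_prod_filter_not n.primeFactors (fun p => p < K)]
        rw [Finset.prod_congr rfl (fun p hp => if_pos (Finset.mem_filter.1 hp).2),
          Finset.prod_congr rfl (fun p (hp : p ∈ _) => if_neg (Finset.mem_filter.1 hp).2),
          Finset.prod_const, Finset.prod_const, one_pow, mul_one]
        apply pow_le_pow_right₀ hM1
        calc (Finset.filter (fun p => p < K) n.primeFactors).card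
            ≤ (Finset.range K).card := Finset.card_le_card (fun p hp => Finset.mem_range.2 (Finset.mem_filter.1 hp).2)
          _ = K := Finset.card_range K


lemma fract_iff_mod (x q H : ℕ) (hq : 0 < q) :
    (Int.fract ((x:ℝ) / (q:ℝ)) ≤ (H:ℝ) / (q:ℝ)) ↔ x % q ≤ H := by
  have hq' : (0:ℝ) < (q:ℝ) := by exact_mod_cast hq
  have hdm := Nat.div_add_mod x q
  have hx' : (x:ℝ) = (q:ℝ) * ((x / q : ℕ) : ℝ) + ((x % q : ℕ) : ℝ) := by
    exact_mod_cast congrArg (Nat.cast : ℕ → ℝ) hdm.symm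
  have hxe : (x:ℝ) / q = ((x / q : ℕ) : ℝ) + ((x % q : ℕ) : ℝ) / q := by
    rw [hx']; field_simp
  have hlt : x % q < q := Nat.mod_lt x hq
  have hfr : Int.fract ((x:ℝ) / q) = ((x % q : ℕ) : ℝ) / q := by
    rw [hxe]
    rw [show ((x / q : ℕ) : ℝ) = (((x / q : ℕ) : ℤ) : ℝ) by push_cast; rfl]
    rw [Int.fract_intCast_add]
    rw [Int.fract_eq_self.2 ⟨by positivity, by
      rw [div_lt_one hq']; exact_mod_cast hlt⟩]
  rw [hfr, div_le_div_iff₀ hq' hq', mul_le_mul_iff_of_pos_right hq']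
  exact_mod_cast Iff.rfl

lemma fiber_sum (f : ℕ → ℂ) (s : Finset ℕ) (H q : ℕ) (hHq : H < q) :
    ∑ a ∈ Finset.Icc 1 H, ∑ n ∈ s.filter (fun n => n % q = a % q), f n
      = ∑ n ∈ s.filter (fun n => n % q ∈ Finset.Icc 1 H), f n := by
  simp_rw [Finset.sum_filter]
  rw [Finset.sum_comm]
  refine Finset.sum_congr rfl fun n _ => ?_
  rw [Finset.sum_congr rfl (fun a (ha : a ∈ Finset.Icc 1 H) => by
    rw [Nat.mod_eq_of_lt (lt_of_le_of_lt (Finset.mem_Icc.1 ha).2 hHq)])]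
  exact Finset.sum_ite_eq (Finset.Icc 1 H) (n % q) (fun _ => f n)

lemma good_q (x h H q : ℕ) (hh : 0 < h) (hhH : h ≤ H) (hHq : H < q) (hHx : H < x)
    (hbad1 : ∀ a ∈ Finset.Ioc (H - h) H, ¬ q ∣ x - a)
    (hbad2 : ∀ b ∈ Finset.Icc 1 h, ¬ q ∣ x + b) :
    ∀ n ∈ Finset.Ioc x (x + h), (n % q ∈ Finset.Icc 1 H ↔ x % q ≤ H) := by
  intro n hn
  rw [Finset.mem_Ioc] at hn
  have hq : 0 < q := by omega
  have hdm := Nat.div_add_mod x q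
  have hrlt : x % q < q := Nat.mod_lt x hq
  set r := x % q with hr
  set j := n - x with hj
  have hj1 : 1 ≤ j := by omega
  have hjh : j ≤ h := by omega
  have hnx : n = x + j := by omega
  have hmod : n % q = (r + j) % q := by
    rw [hnx, Nat.add_mod, Nat.mod_eq_of_lt (show j < q by omega)]
  constructor
  · intro hmem
    rw [Finset.mem_Icc] at hmem
    by_contra hrH
    push_neg at hrH
    rcases lt_trichotomy (r + j) q with hlt | heq | hgt
    · rw [hmod, Nat.mod_eq_of_lt hlt] at hmem; omega
    · rw [hmod, heq, Nat.mod_self] at hmem; omega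
    · have hsub : (r + j) % q = r + j - q := by
        rw [Nat.mod_eq_sub_mod (by omega), Nat.mod_eq_of_lt (by omega)]
      rw [hmod, hsub] at hmem
      have hb : q - r ∈ Finset.Icc 1 h := Finset.mem_Icc.2 ⟨by omega, by omega⟩
      refine hbad2 _ hb ⟨x / q + 1, ?_⟩
      have hq1 : q * (x / q + 1) = q * (x / q) + q := by ring
      omega
  · intro hrH
    have hrHh : r + h ≤ H := by
      by_contra hcon
      push_neg at hcon
      have ha : r ∈ Finset.Ioc (H - h) H := Finset.mem_Ioc.2 ⟨by omega, hrH⟩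
      exact hbad1 _ ha ⟨x / q, by omega⟩
    rw [hmod, Nat.mod_eq_of_lt (by omega)]
    exact Finset.mem_Icc.2 ⟨by omega, by omega⟩

lemma count_dvd (Hn Qn m : ℕ) (hm : m ≠ 0) :
    ((Finset.Ioc Hn Qn).filter (fun q => q ∣ m)).card ≤ m.divisors.card := by
  apply Finset.card_le_card
  intro q hq
  rw [Finset.mem_filter] at hq
  exact Nat.mem_divisors.2 ⟨hq.2, hm⟩


lemma main_step (h H Q x : ℕ) (hh : 0 < h) (hx : 0 < x) (hhH : h ≤ H) (hHQ : H < Q)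
    (hHx2 : 2 * H ≤ x)
    (δ Cf Cg Cd Cq : ℝ) (hδ : 0 < δ) (hCf0 : 0 ≤ Cf) (hCg0 : 0 ≤ Cg) (hCd1 : 1 ≤ Cd)
    (hCq0 : 0 < Cq) (hQxb : (Q:ℝ) ≤ Cq * x)
    (f g' : ℕ → ℂ)
    (hCf : ∀ n : ℕ, 1 ≤ n → ‖f n‖ ≤ Cf * (n:ℝ) ^ δ)
    (hCg : ∀ n : ℕ, 1 ≤ n → ‖g' n‖ ≤ Cg * (n:ℝ) ^ δ)
    (hCd : ∀ n : ℕ, n ≠ 0 → (n.divisors.card : ℝ) ≤ Cd * (n:ℝ) ^ δ) :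
    ‖(∑ a ∈ Finset.Icc 1 H, ∑ q ∈ Finset.Ioc H Q,
          g' q * ∑ n ∈ (Finset.Ioc x (x + h)).filter (fun n => n % q = a % q), f n)
        - (∑ q ∈ (Finset.Ioc H Q).filter
              (fun q : ℕ => Int.fract ((x : ℝ) / (q : ℝ)) ≤ (H : ℝ) / (q : ℝ)), g' q) *
            (∑ n ∈ Finset.Ioc x (x + h), f n)‖
      ≤ (4 * Cd * Cg * Cf * (2:ℝ)^δ * (2:ℝ)^δ * Cq^δ) * ((x:ℝ) ^ (3*δ) * (h:ℝ) ^ 2) := by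
  classical
  have hHx' : H < x := by omega
  have hx0 : (0:ℝ) < (x:ℝ) := by exact_mod_cast hx
  set s := Finset.Ioc x (x + h) with hs
  set S := ∑ n ∈ s, f n with hS
  -- Step A1
  have eA : (∑ a ∈ Finset.Icc 1 H, ∑ q ∈ Finset.Ioc H Q,
        g' q * ∑ n ∈ s.filter (fun n => n % q = a % q), f n)
      = ∑ q ∈ Finset.Ioc H Q, g' q * ∑ n ∈ s.filter (fun n => n % q ∈ Finset.Icc 1 H), f n := by
    rw [Finset.sum_comm]
    refine Finset.sum_congr rfl fun q hq => ?_
    rw [← Finset.mul_sum, fiber_sum f s H q (Finset.mem_Ioc.1 hq).1]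
  -- Step A2
  have eB : (∑ q ∈ (Finset.Ioc H Q).filter
        (fun q : ℕ => Int.fract ((x : ℝ) / (q : ℝ)) ≤ (H : ℝ) / (q : ℝ)), g' q) * S
      = ∑ q ∈ Finset.Ioc H Q, (if x % q ≤ H then g' q * S else 0) := by
    have hfc : (Finset.Ioc H Q).filter
        (fun q : ℕ => Int.fract ((x : ℝ) / (q : ℝ)) ≤ (H : ℝ) / (q : ℝ))
        = (Finset.Ioc H Q).filter (fun q => x % q ≤ H) := by
      apply Finset.filter_congr
      intro q hq
      have hq0 : 0 < q := lt_of_le_of_lt (Nat.zero_le H) (Finset.mem_Ioc.1 hq).1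
      simp [fract_iff_mod x q H hq0]
    rw [hfc, Finset.sum_mul, Finset.sum_filter]
  rw [eA, eB, ← Finset.sum_sub_distrib]
  set F : ℕ → ℂ := fun q =>
    g' q * (∑ n ∈ s.filter (fun n => n % q ∈ Finset.Icc 1 H), f n)
      - (if x % q ≤ H then g' q * S else 0) with hF
  set P : ℕ → Prop := fun q =>
    (∃ a ∈ Finset.Ioc (H - h) H, q ∣ x - a) ∨ (∃ b ∈ Finset.Icc 1 h, q ∣ x + b) with hP
  have hzero : ∀ q ∈ Finset.Ioc H Q, ¬ P q → F q = 0 := by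
    intro q hq hnP
    have hnP1 : ∀ a ∈ Finset.Ioc (H - h) H, ¬ q ∣ x - a :=
      fun a ha hd => hnP (Or.inl ⟨a, ha, hd⟩)
    have hnP2 : ∀ b ∈ Finset.Icc 1 h, ¬ q ∣ x + b :=
      fun b hb hd => hnP (Or.inr ⟨b, hb, hd⟩)
    have hgood := good_q x h H q hh hhH (Finset.mem_Ioc.1 hq).1 hHx' hnP1 hnP2
    simp only [hF]
    by_cases hc : x % q ≤ H
    · rw [if_pos hc, Finset.filter_true_of_mem (fun n hn => (hgood n hn).2 hc), sub_self]
    · rw [if_neg hc, Finset.filter_false_of_mem (fun n hn hmem => hc ((hgood n hn).1 hmem))]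
      simp
  have esum : ∑ q ∈ Finset.Ioc H Q, F q = ∑ q ∈ (Finset.Ioc H Q).filter P, F q := by
    refine (Finset.sum_filter_of_ne ?_).symm
    intro q hq hne
    by_contra hnP
    exact hne (hzero q hq hnP)
  rw [esum]
  -- per-term bound
  have hfb : ∀ n ∈ s, ‖f n‖ ≤ Cf * ((2*x:ℕ):ℝ) ^ δ := by
    intro n hn
    rw [hs, Finset.mem_Ioc] at hn
    refine le_trans (hCf n (by omega)) ?_
    apply mul_le_mul_of_nonneg_left _ hCf0
    apply Real.rpow_le_rpow (by positivity) _ hδ.le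
    exact_mod_cast (by omega : n ≤ 2 * x)
  have hsumf : ∀ t : Finset ℕ, t ⊆ s → ‖∑ n ∈ t, f n‖ ≤ (h:ℝ) * (Cf * ((2*x:ℕ):ℝ) ^ δ) := by
    intro t ht
    refine le_trans (norm_sum_le _ _) ?_
    calc ∑ n ∈ t, ‖f n‖ ≤ ∑ n ∈ s, ‖f n‖ :=
          Finset.sum_le_sum_of_subset_of_nonneg ht (fun n _ _ => norm_nonneg _)
      _ ≤ s.card • (Cf * ((2*x:ℕ):ℝ) ^ δ) := Finset.sum_le_card_nsmul _ _ _ hfb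
      _ = (h:ℝ) * (Cf * ((2*x:ℕ):ℝ) ^ δ) := by
          rw [hs, Nat.card_Ioc, nsmul_eq_mul]
          congr 2
          omega
  set B : ℝ := (Cg * (Cq * x) ^ δ) * (2 * ((h:ℝ) * (Cf * ((2*x:ℕ):ℝ) ^ δ))) with hB
  have hterm : ∀ q ∈ (Finset.Ioc H Q).filter P, ‖F q‖ ≤ B := by
    intro q hq
    rw [Finset.mem_filter, Finset.mem_Ioc] at hq
    have hq1 : 1 ≤ q := by omega
    have hgb : ‖g' q‖ ≤ Cg * (Cq * x) ^ δ := by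
      refine le_trans (hCg q hq1) ?_
      apply mul_le_mul_of_nonneg_left _ hCg0
      apply Real.rpow_le_rpow (by positivity) _ hδ.le
      calc (q:ℝ) ≤ (Q:ℝ) := by exact_mod_cast hq.1.2
        _ ≤ Cq * x := hQxb
    rw [hF]
    have h1 : ‖g' q * (∑ n ∈ s.filter (fun n => n % q ∈ Finset.Icc 1 H), f n)‖
        ≤ (Cg * (Cq * x) ^ δ) * ((h:ℝ) * (Cf * ((2*x:ℕ):ℝ) ^ δ)) := by
      rw [norm_mul]
      exact mul_le_mul hgb (hsumf _ (Finset.filter_subset _ _)) (norm_nonneg _)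
        (by positivity)
    have h2 : ‖(if x % q ≤ H then g' q * S else 0)‖
        ≤ (Cg * (Cq * x) ^ δ) * ((h:ℝ) * (Cf * ((2*x:ℕ):ℝ) ^ δ)) := by
      split
      · rw [norm_mul]
        exact mul_le_mul hgb (hsumf s (subset_refl s)) (norm_nonneg _) (by positivity)
      · simp
        positivity
    calc ‖_ - _‖ ≤ _ + _ := norm_sub_le _ _
      _ ≤ (Cg * (Cq * x) ^ δ) * ((h:ℝ) * (Cf * ((2*x:ℕ):ℝ) ^ δ))
            + (Cg * (Cq * x) ^ δ) * ((h:ℝ) * (Cf * ((2*x:ℕ):ℝ) ^ δ)) := add_le_add h1 h2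
      _ = B := by rw [hB]; ring
  -- card bound
  have hcard : (((Finset.Ioc H Q).filter P).card : ℝ) ≤ 2 * (h:ℝ) * (Cd * ((2*x:ℕ):ℝ) ^ δ) := by
    have hsub : (Finset.Ioc H Q).filter P ⊆
        ((Finset.Ioc (H - h) H).biUnion (fun a => (Finset.Ioc H Q).filter (fun q => q ∣ x - a)))
          ∪ ((Finset.Icc 1 h).biUnion (fun b => (Finset.Ioc H Q).filter (fun q => q ∣ x + b))) := by
      intro q hq
      rw [Finset.mem_filter] at hq
      rcases hq.2 with ⟨a, ha, hdvd⟩ | ⟨b, hb, hdvd⟩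
      · exact Finset.mem_union_left _ (Finset.mem_biUnion.2 ⟨a, ha, Finset.mem_filter.2 ⟨hq.1, hdvd⟩⟩)
      · exact Finset.mem_union_right _ (Finset.mem_biUnion.2 ⟨b, hb, Finset.mem_filter.2 ⟨hq.1, hdvd⟩⟩)
    have hdb : ∀ m : ℕ, m ≠ 0 → (m:ℝ) ≤ ((2*x:ℕ):ℝ) →
        (((Finset.Ioc H Q).filter (fun q => q ∣ m)).card : ℝ) ≤ Cd * ((2*x:ℕ):ℝ) ^ δ := by
      intro m hm hm2
      calc (((Finset.Ioc H Q).filter (fun q => q ∣ m)).card : ℝ)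
          ≤ (m.divisors.card : ℝ) := by exact_mod_cast count_dvd H Q m hm
        _ ≤ Cd * (m:ℝ) ^ δ := hCd m hm
        _ ≤ Cd * ((2*x:ℕ):ℝ) ^ δ := by
            apply mul_le_mul_of_nonneg_left _ (by linarith)
            exact Real.rpow_le_rpow (by positivity) hm2 hδ.le
    calc (((Finset.Ioc H Q).filter P).card : ℝ)
        ≤ ((((Finset.Ioc (H - h) H).biUnion (fun a => (Finset.Ioc H Q).filter (fun q => q ∣ x - a)))
            ∪ ((Finset.Icc 1 h).biUnion (fun b => (Finset.Ioc H Q).filter (fun q => q ∣ x + b)))).card : ℝ) := by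
          exact_mod_cast Finset.card_le_card hsub
      _ ≤ (((Finset.Ioc (H - h) H).biUnion (fun a => (Finset.Ioc H Q).filter (fun q => q ∣ x - a))).card : ℝ)
            + (((Finset.Icc 1 h).biUnion (fun b => (Finset.Ioc H Q).filter (fun q => q ∣ x + b))).card : ℝ) := by
          exact_mod_cast Finset.card_union_le _ _
      _ ≤ (∑ a ∈ Finset.Ioc (H - h) H, (((Finset.Ioc H Q).filter (fun q => q ∣ x - a)).card : ℝ))
            + (∑ b ∈ Finset.Icc 1 h, (((Finset.Ioc H Q).filter (fun q => q ∣ x + b)).card : ℝ)) := by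
          push_cast
          exact add_le_add (by exact_mod_cast Finset.card_biUnion_le)
            (by exact_mod_cast Finset.card_biUnion_le)
      _ ≤ (∑ _a ∈ Finset.Ioc (H - h) H, Cd * ((2*x:ℕ):ℝ) ^ δ)
            + (∑ _b ∈ Finset.Icc 1 h, Cd * ((2*x:ℕ):ℝ) ^ δ) := by
          refine add_le_add (Finset.sum_le_sum fun a ha => ?_) (Finset.sum_le_sum fun b hb => ?_)
          · rw [Finset.mem_Ioc] at ha
            refine hdb _ (by omega) ?_
            exact_mod_cast (by omega : x - a ≤ 2 * x)
          · rw [Finset.mem_Icc] at hb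
            refine hdb _ (by omega) ?_
            exact_mod_cast (by omega : x + b ≤ 2 * x)
      _ = 2 * (h:ℝ) * (Cd * ((2*x:ℕ):ℝ) ^ δ) := by
          rw [Finset.sum_const, Finset.sum_const, Nat.card_Ioc, Nat.card_Icc, nsmul_eq_mul, nsmul_eq_mul]
          have e1 : H - (H - h) = h := by omega
          have e2 : h + 1 - 1 = h := by omega
          rw [e1, e2]
          ring
  -- assemble
  calc ‖∑ q ∈ (Finset.Ioc H Q).filter P, F q‖
      ≤ ∑ q ∈ (Finset.Ioc H Q).filter P, ‖F q‖ := norm_sum_le _ _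
    _ ≤ ((Finset.Ioc H Q).filter P).card • B := Finset.sum_le_card_nsmul _ _ _ hterm
    _ = (((Finset.Ioc H Q).filter P).card : ℝ) * B := nsmul_eq_mul _ _
    _ ≤ (2 * (h:ℝ) * (Cd * ((2*x:ℕ):ℝ) ^ δ)) * B := by
        apply mul_le_mul_of_nonneg_right hcard
        rw [hB]; positivity
    _ = (4 * Cd * Cg * Cf * (2:ℝ)^δ * (2:ℝ)^δ * Cq^δ) * ((x:ℝ) ^ (3*δ) * (h:ℝ) ^ 2) := by
        rw [hB]
        have e2x : ((2*x:ℕ):ℝ) ^ δ = (2:ℝ)^δ * (x:ℝ)^δ := by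
          push_cast
          exact Real.mul_rpow (by norm_num) (by positivity)
        have eqx : (Cq * (x:ℝ)) ^ δ = Cq^δ * (x:ℝ)^δ := Real.mul_rpow hCq0.le (by positivity)
        rw [e2x, eqx, show (3:ℝ)*δ = δ + δ + δ by ring, Real.rpow_add hx0, Real.rpow_add hx0]
        ring


/-- Second formula of the Pinch Lemma. -/
theorem pinch_lemma_second
    (h H Q x : ℕ → ℕ) (hh : ∀ i, 0 < h i) (hx : ∀ i, 0 < x i)
    (hhH : ∀ i, h i ≤ H i) (hHQ : ∀ i, H i < Q i)
    (hQx : (fun i => (Q i : ℝ)) =O[atTop] (fun i => (x i : ℝ)))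
    (hHx : (fun i => (H i : ℝ)) =o[atTop] (fun i => (x i : ℝ)))
    (f g' : ℕ → ℂ) (hf : EssBdd f) (hg' : EssBdd g')
    (ε : ℝ) (hε : 0 < ε) :
    (fun i =>
        (∑ a ∈ Finset.Icc 1 (H i), ∑ q ∈ Finset.Ioc (H i) (Q i),
            g' q * ∑ n ∈ (Finset.Ioc (x i) (x i + h i)).filter (fun n => n % q = a % q), f n)
          - (∑ q ∈ (Finset.Ioc (H i) (Q i)).filter
                (fun q : ℕ => Int.fract ((x i : ℝ) / (q : ℝ)) ≤ (H i : ℝ) / (q : ℝ)), g' q) *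
              (∑ n ∈ Finset.Ioc (x i) (x i + h i), f n))
      =O[atTop] (fun i => (x i : ℝ) ^ ε * (h i : ℝ) ^ 2) := by
  set δ := ε / 3 with hδdef
  have hδ : 0 < δ := by positivity
  obtain ⟨Cf, hCf⟩ := hf δ hδ
  obtain ⟨Cg, hCg⟩ := hg' δ hδ
  obtain ⟨Cd, hCd1, hCd⟩ := divisor_bound δ hδ
  have hCf0 : 0 ≤ Cf := le_trans (norm_nonneg (f 1)) (by simpa using hCf 1 le_rfl)
  have hCg0 : 0 ≤ Cg := le_trans (norm_nonneg (g' 1)) (by simpa using hCg 1 le_rfl)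
  obtain ⟨Cq, hCq0, hCqw⟩ := hQx.exists_pos
  rw [isBigOWith_iff] at hCqw
  rw [isBigO_iff]
  refine ⟨4 * Cd * Cg * Cf * (2:ℝ)^δ * (2:ℝ)^δ * Cq^δ, ?_⟩
  have hev := hHx.def (by norm_num : (0:ℝ) < 1/2)
  filter_upwards [hCqw, hev] with i hQi hHi
  have hxi0 : (0:ℝ) < (x i : ℝ) := by exact_mod_cast hx i
  have hQi' : ((Q i : ℕ) : ℝ) ≤ Cq * (x i : ℝ) := by
    rw [Real.norm_eq_abs, Real.norm_eq_abs, abs_of_nonneg (by positivity),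
      abs_of_nonneg (by positivity)] at hQi
    exact hQi
  have hHi' : 2 * H i ≤ x i := by
    rw [Real.norm_eq_abs, Real.norm_eq_abs, abs_of_nonneg (by positivity),
      abs_of_nonneg (by positivity)] at hHi
    have : (2:ℝ) * (H i : ℝ) ≤ (x i : ℝ) := by linarith
    exact_mod_cast this
  have hmain := main_step (h i) (H i) (Q i) (x i) (hh i) (hx i) (hhH i) (hHQ i) hHi'
    δ Cf Cg Cd Cq hδ hCf0 hCg0 hCd1 hCq0 hQi' f g' hCf hCg hCd
  rw [Real.norm_eq_abs, abs_of_nonneg (by positivity)]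
  have hεδ : ε = 3 * δ := by rw [hδdef]; ring
  rw [hεδ]
  exact hmain
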